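/- For n > k > 0 with k odd, the number of k-element subsets of Z/nZ summing to 0 modulo n equals the number of necklaces with k black beads and n−k white beads, i.e., T(n,k,0) = N(n,k) = (1/n)·∑_{d | gcd(n,k)} φ(d)·C(n/d,k/d). -/

import Mathlib

open Pointwise

/-- `T n k s` is the number of `k`-element subsets of `ℤ/nℤ` whose sum of elements
is `s` modulo `n`. -/
noncomputable def T (n k : ℕ) (s : ℤ) : ℕ :=
  Nat.card {Q : Finset (ZMod n) // Q.card = k ∧ (∑ a ∈ Q, a) = (s : ZMod n)}

/-- `N n k` is the number of necklaces with `k` black beads and `n - k` white beads,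
i.e., the number of orbits of `k`-element subsets of `ℤ/nℤ` under the translation
action of `ℤ/nℤ`. -/
noncomputable def N (n k : ℕ) : ℕ :=
  Nat.card {C : Set (Finset (ZMod n)) //
    ∃ Q : Finset (ZMod n), Q.card = k ∧ C = AddAction.orbit (ZMod n) Q}


open Finset Pointwise Polynomial

variable {n : ℕ} [NeZero n]

lemma fiber_card (n : ℕ) [NeZero n] {d : ℕ} [NeZero d] (hd : d ∣ n) (b : ZMod d) :
    (Finset.univ.filter fun a : ZMod n => ZMod.castHom hd (ZMod d) a = b).card = n / d := by
  have hd0 : 0 < d := Nat.pos_of_ne_zero (NeZero.ne d)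
  have hcast : ∀ a : ZMod n, ZMod.castHom hd (ZMod d) a = ((a.val : ℕ) : ZMod d) := by
    intro a
    conv_lhs => rw [← ZMod.natCast_zmod_val a]
    exact map_natCast _ _
  have hb : b.val < d := b.val_lt
  have key : ∀ i < n / d, b.val + d * i < n := by
    intro i hi
    calc b.val + d * i < d + d * i := by omega
    _ = d * (i + 1) := by ring
    _ ≤ d * (n / d) := Nat.mul_le_mul_left d hi
    _ = n := Nat.mul_div_cancel' hd
  rw [eq_comm, ← Finset.card_range (n / d)]
  apply Finset.card_bij' (i := fun i _ => ((b.val + d * i : ℕ) : ZMod n))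
    (j := fun a _ => a.val / d)
  · intro i hi
    simp only [mem_filter, mem_univ, true_and]
    rw [map_natCast]
    push_cast
    rw [ZMod.natCast_zmod_val b, ZMod.natCast_self]
    ring
  · intro a ha
    simp only [mem_filter, mem_univ, true_and] at ha
    rw [mem_range]
    exact Nat.div_lt_div_of_lt_of_dvd hd a.val_lt
  · intro i hi
    simp only [mem_range] at hi
    rw [ZMod.val_natCast_of_lt (key i hi), Nat.add_mul_div_left _ _ hd0,
      Nat.div_eq_of_lt hb, zero_add]
  · intro a ha
    simp only [mem_filter, mem_univ, true_and] at ha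
    rw [hcast] at ha
    have hbv : b.val = a.val % d := by rw [← ha, ZMod.val_natCast]
    rw [hbv, Nat.mod_add_div, ZMod.natCast_zmod_val]

lemma gcd_val_eq (t : ZMod n) : n / addOrderOf t = Nat.gcd n t.val := by
  have h1 : addOrderOf t = n / Nat.gcd n t.val := by
    conv_lhs => rw [← ZMod.natCast_zmod_val t]
    exact ZMod.addOrderOf_coe t.val (NeZero.ne n)
  rw [h1, Nat.div_div_self (Nat.gcd_dvd_left n t.val) (NeZero.ne n)]

lemma ord_dvd (t : ZMod n) : addOrderOf t ∣ n := by
  have := addOrderOf_dvd_card (x := t)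
  rwa [ZMod.card] at this

lemma m_dvd (t : ZMod n) : n / addOrderOf t ∣ n :=
  Nat.div_dvd_of_dvd (ord_dvd t)

lemma m_nezero (t : ZMod n) : NeZero (n / addOrderOf t) := by
  constructor
  have h1 : 0 < addOrderOf t := addOrderOf_pos t
  have := Nat.div_pos (Nat.le_of_dvd (Nat.pos_of_ne_zero (NeZero.ne n)) (ord_dvd t)) h1
  omega

lemma pi_t_eq_zero (t : ZMod n) :
    ZMod.castHom (m_dvd t) (ZMod (n / addOrderOf t)) t = 0 := by
  haveI := m_nezero t
  have h0 : ZMod.castHom (m_dvd t) (ZMod (n / addOrderOf t)) t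
      = ((t.val : ℕ) : ZMod (n / addOrderOf t)) := by
    rw [← map_natCast (ZMod.castHom (m_dvd t) (ZMod (n / addOrderOf t))) t.val,
      ZMod.natCast_zmod_val]
  rw [h0, ZMod.natCast_eq_zero_iff, gcd_val_eq]
  exact Nat.gcd_dvd_right n t.val

lemma mem_zmultiples_of_pi_eq_zero {t x : ZMod n}
    (hx : ZMod.castHom (m_dvd t) (ZMod (n / addOrderOf t)) x = 0) :
    x ∈ AddSubgroup.zmultiples t := by
  haveI := m_nezero t
  set m := n / addOrderOf t with hm
  have hdvd : m ∣ x.val := by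
    rw [← ZMod.natCast_eq_zero_iff]
    rw [← map_natCast (ZMod.castHom (m_dvd t) (ZMod m)) x.val, ZMod.natCast_zmod_val]
    exact hx
  have hmz : (m : ZMod n) ∈ AddSubgroup.zmultiples t := by
    rw [AddSubgroup.mem_zmultiples_iff]
    refine ⟨Nat.gcdB n t.val, ?_⟩
    have : ((Nat.gcd n t.val : ℤ) : ZMod n) = ((n : ℤ) * Nat.gcdA n t.val + (t.val : ℤ) * Nat.gcdB n t.val : ℤ) := by
      rw [← Nat.gcd_eq_gcd_ab]
    rw [zsmul_eq_mul, hm, gcd_val_eq]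
    push_cast at this ⊢
    rw [this, ZMod.natCast_self, ZMod.natCast_zmod_val]
    ring
  have : x = (x.val / m) • ((m : ℕ) : ZMod n) := by
    rw [nsmul_eq_mul, ← Nat.cast_mul, Nat.div_mul_cancel hdvd, ZMod.natCast_zmod_val]
  rw [this]
  exact AddSubgroup.nsmul_mem _ hmz _

section Invariant

variable (t : ZMod n)

noncomputable abbrev π := ZMod.castHom (m_dvd t) (ZMod (n / addOrderOf t))

lemma eq_filter_of_invariant {Q : Finset (ZMod n)} (h : t +ᵥ Q = Q) :
    Q = univ.filter (fun a => π t a ∈ Q.image (π t)) := by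
  apply Finset.Subset.antisymm
  · intro a ha
    simp only [mem_filter, mem_univ, true_and]
    exact mem_image_of_mem _ ha
  · intro a ha
    simp only [mem_filter, mem_univ, true_and, mem_image] at ha
    obtain ⟨b, hb, hab⟩ := ha
    have hx : (a - b) ∈ AddSubgroup.zmultiples t := by
      apply mem_zmultiples_of_pi_eq_zero
      rw [map_sub, hab, sub_self]
    have hstab : AddSubgroup.zmultiples t ≤ AddAction.stabilizer (ZMod n) Q :=
      AddSubgroup.zmultiples_le.mpr (AddAction.mem_stabilizer_iff.mpr h)
    have hQ : (a - b) +ᵥ Q = Q := AddAction.mem_stabilizer_iff.mp (hstab hx)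
    rw [← hQ, Finset.mem_vadd_finset]
    exact ⟨b, hb, by rw [vadd_eq_add]; ring⟩

lemma invariant_filter (R : Finset (ZMod (n / addOrderOf t))) :
    t +ᵥ (univ.filter fun a => π t a ∈ R) = (univ.filter fun a => π t a ∈ R) := by
  apply Finset.eq_of_subset_of_card_le
  · intro x hx
    rw [Finset.mem_vadd_finset] at hx
    obtain ⟨y, hy, hxy⟩ := hx
    simp only [mem_filter, mem_univ, true_and] at hy ⊢
    rw [← hxy, vadd_eq_add, map_add, pi_t_eq_zero, zero_add]
    exact hy
  · rw [Finset.card_vadd_finset]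

lemma image_filter (R : Finset (ZMod (n / addOrderOf t))) :
    (univ.filter fun a => π t a ∈ R).image (π t) = R := by
  haveI := m_nezero t
  apply Finset.Subset.antisymm
  · intro b hb
    simp only [mem_image, mem_filter, mem_univ, true_and] at hb
    obtain ⟨a, ha, hab⟩ := hb
    rwa [← hab]
  · intro b hb
    simp only [mem_image, mem_filter, mem_univ, true_and]
    refine ⟨((b.val : ℕ) : ZMod n), ?_, ?_⟩
    · rw [map_natCast, ZMod.natCast_zmod_val]; exact hb
    · rw [map_natCast, ZMod.natCast_zmod_val]

lemma card_filter_pi (R : Finset (ZMod (n / addOrderOf t))) :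
    (univ.filter fun a : ZMod n => π t a ∈ R).card = R.card * addOrderOf t := by
  haveI := m_nezero t
  rw [Finset.card_eq_sum_card_fiberwise (f := π t) (s := univ.filter fun a : ZMod n => π t a ∈ R)
    (t := R) (fun x hx => Finset.mem_coe.mpr (mem_filter.mp (Finset.mem_coe.mp hx)).2)]
  have key : ∀ b ∈ R, ((univ.filter fun a : ZMod n => π t a ∈ R).filter
      fun a => π t a = b).card = addOrderOf t := by
    intro b hb
    have h1 : ((univ.filter fun a : ZMod n => π t a ∈ R).filter fun a => π t a = b)
        = univ.filter fun a : ZMod n => π t a = b := by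
      ext a
      simp only [mem_filter, mem_univ, true_and, and_iff_right_iff_imp]
      intro h; rw [h]; exact hb
    rw [h1, fiber_card n (m_dvd t) b, Nat.div_div_self (ord_dvd t) (NeZero.ne n)]
  rw [Finset.sum_congr rfl key, Finset.sum_const, smul_eq_mul]

lemma card_invariant (k : ℕ) :
    (univ.filter fun Q : Finset (ZMod n) => Q.card = k ∧ t +ᵥ Q = Q).card
      = if addOrderOf t ∣ k then (n / addOrderOf t).choose (k / addOrderOf t) else 0 := by
  haveI := m_nezero t
  have hstep : (univ.filter fun Q : Finset (ZMod n) => Q.card = k ∧ t +ᵥ Q = Q).card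
      = (univ.filter fun R : Finset (ZMod (n / addOrderOf t)) =>
          R.card * addOrderOf t = k).card := by
    apply Finset.card_bij' (i := fun Q _ => Q.image (π t))
      (j := fun R _ => univ.filter fun a => π t a ∈ R)
    · intro Q hQ
      simp only [mem_filter, mem_univ, true_and] at hQ ⊢
      obtain ⟨hcard, hinv⟩ := hQ
      conv_rhs => rw [← hcard]
      conv_rhs => rw [eq_filter_of_invariant t hinv]
      rw [card_filter_pi]
    · intro R hR
      simp only [mem_filter, mem_univ, true_and] at hR ⊢
      exact ⟨by rw [card_filter_pi]; exact hR, invariant_filter t R⟩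
    · intro Q hQ
      simp only [mem_filter, mem_univ, true_and] at hQ
      exact (eq_filter_of_invariant t hQ.2).symm
    · intro R hR
      exact image_filter t R
  rw [hstep]
  by_cases hdvd : addOrderOf t ∣ k
  · rw [if_pos hdvd]
    have he : 0 < addOrderOf t := addOrderOf_pos t
    have h2 : (univ.filter fun R : Finset (ZMod (n / addOrderOf t)) =>
        R.card * addOrderOf t = k) = univ.filter fun R => R.card = k / addOrderOf t := by
      apply filter_congr
      intro R _
      constructor
      · intro h
        exact (Nat.div_eq_of_eq_mul_left he (by rw [← h])).symm
      · intro h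
        rw [h, Nat.div_mul_cancel hdvd]
    rw [h2, ← powerset_univ, ← Finset.powersetCard_eq_filter, Finset.card_powersetCard,
      Finset.card_univ, ZMod.card]
  · rw [if_neg hdvd]
    rw [Finset.card_eq_zero, Finset.filter_eq_empty_iff]
    intro R _
    intro hR
    exact hdvd ⟨R.card, by rw [← hR]; ring⟩

end Invariant


lemma addChar_map_sum {A M : Type*} [AddCommMonoid A] [CommMonoid M] (ψ : AddChar A M)
    {ι : Type*} (s : Finset ι) (f : ι → A) :
    ψ (∑ i ∈ s, f i) = ∏ i ∈ s, ψ (f i) := by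
  classical
  induction s using Finset.induction_on with
  | empty => simp
  | insert _ _ h ih =>
    rw [Finset.sum_insert h, Finset.prod_insert h, AddChar.map_add_eq_mul, ih]

lemma coeff_prod_one_add {α : Type*} (s : Finset α) (f : α → ℂ) (k : ℕ) :
    (∏ a ∈ s, (1 + Polynomial.C (f a) * Polynomial.X)).coeff k
      = ∑ Q ∈ s.powersetCard k, ∏ a ∈ Q, f a := by
  classical
  have h1 : ∀ a ∈ s, (1 : ℂ[X]) + C (f a) * X = C (f a) * X + 1 := fun a _ => by ring
  rw [Finset.prod_congr rfl h1, Finset.prod_add, Polynomial.finset_sum_coeff]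
  have h2 : ∀ t ∈ s.powerset, ((∏ a ∈ t, C (f a) * X) * ∏ _a ∈ s \ t, (1:ℂ[X])).coeff k
      = if t.card = k then ∏ a ∈ t, f a else 0 := by
    intro t _
    rw [Finset.prod_const_one, mul_one, Finset.prod_mul_distrib, Finset.prod_const,
      ← map_prod, Polynomial.coeff_C_mul, Polynomial.coeff_X_pow]
    by_cases h : t.card = k
    · simp [h]
    · simp [h, Ne.symm h]
  rw [Finset.sum_congr rfl h2, ← Finset.sum_filter, ← Finset.powersetCard_eq_filter]

lemma prod_one_add_root {e : ℕ} (he : 0 < e) {μ : ℂ} (hμ : IsPrimitiveRoot μ e) :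
    ∏ z ∈ Polynomial.nthRootsFinset e (1 : ℂ), (1 + C z * X)
      = 1 + C ((-1 : ℂ)^(e+1)) * X^e := by
  apply Polynomial.funext
  intro x
  rw [eval_prod]
  simp only [eval_add, eval_one, eval_mul, eval_C, eval_X, eval_pow]
  have hroot : ∀ y : ℂ, ∏ z ∈ nthRootsFinset e (1 : ℂ), (y - z) = y^e - 1 := by
    intro y
    have h0 := congrArg (eval y) (Polynomial.X_pow_sub_one_eq_prod he hμ)
    simpa [eval_prod] using h0.symm
  by_cases hx : x = 0
  · simp [hx, zero_pow he.ne']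
  · have h1 : ∀ z ∈ nthRootsFinset e (1 : ℂ), 1 + z * x = (-x) * ((-x⁻¹) - z) := by
      intro z _
      field_simp
      ring
    rw [Finset.prod_congr rfl h1, Finset.prod_mul_distrib, Finset.prod_const, hroot,
      hμ.card_nthRootsFinset]
    have hxe : x ^ e ≠ 0 := pow_ne_zero e hx
    have h2 : ((-1 : ℂ)) ^ e * (-1) ^ e = 1 := by
      rw [← pow_add, ← two_mul, pow_mul]
      norm_num
    field_simp
    rw [neg_pow, pow_succ]
    have hinv : x ^ e * x⁻¹ ^ e = 1 := by rw [← mul_pow, mul_inv_cancel₀ hx, one_pow]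
    linear_combination ((-1 : ℂ) ^ e * (-1) ^ e) * hinv + h2

lemma prod_zmod_eq_nthRoots (e : ℕ) [NeZero e] {μ : ℂ} (hμ : IsPrimitiveRoot μ e)
    (F : ℂ → Polynomial ℂ) :
    ∏ b : ZMod e, F (μ ^ b.val) = ∏ z ∈ Polynomial.nthRootsFinset e (1 : ℂ), F z := by
  have he : 0 < e := Nat.pos_of_ne_zero (NeZero.ne e)
  apply Finset.prod_nbij (i := fun b : ZMod e => μ ^ b.val)
  · intro b _
    rw [Polynomial.mem_nthRootsFinset he, ← pow_mul, mul_comm, pow_mul, hμ.pow_eq_one,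
      one_pow]
  · intro b _ c _ h
    exact ZMod.val_injective e (hμ.pow_inj b.val_lt c.val_lt h)
  · intro z hz
    rw [Finset.mem_coe, Polynomial.mem_nthRootsFinset he] at hz
    obtain ⟨i, hi, hiz⟩ := hμ.eq_pow_of_pow_eq_one hz
    exact ⟨(i : ZMod e), Finset.mem_coe.mpr (Finset.mem_univ _), by
      show μ ^ (ZMod.val ((i : ℕ) : ZMod e)) = z
      rw [ZMod.val_natCast_of_lt hi]; exact hiz⟩
  · intro b _
    rfl

lemma coeff_one_add_pow (e M k : ℕ) (he : 0 < e) (hkM : k ≤ e * M) (c : ℂ) :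
    ((1 + C c * X ^ e) ^ M).coeff k
      = if e ∣ k then c ^ (k / e) * (M.choose (k / e)) else 0 := by
  rw [add_comm ((1 : ℂ[X])) (C c * X ^ e), add_pow, Polynomial.finset_sum_coeff]
  have h1 : ∀ i ∈ Finset.range (M + 1),
      ((C c * X ^ e) ^ i * 1 ^ (M - i) * (M.choose i : ℂ[X])).coeff k
        = if k = e * i then c ^ i * (M.choose i) else 0 := by
    intro i _
    rw [one_pow, mul_one, mul_pow, ← map_pow, ← pow_mul, ← Polynomial.C_eq_natCast,
      mul_right_comm, ← Polynomial.C_mul, Polynomial.coeff_C_mul, Polynomial.coeff_X_pow]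
    by_cases h : k = e * i
    · simp [h]
    · simp [h]
  rw [Finset.sum_congr rfl h1]
  by_cases hdvd : e ∣ k
  · rw [if_pos hdvd]
    have hle : k / e ≤ M := by
      have := Nat.div_le_div_right (c := e) hkM
      rwa [Nat.mul_div_cancel_left M he] at this
    rw [Finset.sum_eq_single (k / e)]
    · rw [if_pos (Nat.mul_div_cancel' hdvd).symm]
    · intro i _ hne
      rw [if_neg]
      intro h
      exact hne (by rw [h, Nat.mul_div_cancel_left i he])
    · intro h
      exact absurd (Finset.mem_range.mpr (by omega)) h
  · rw [if_neg hdvd]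
    apply Finset.sum_eq_zero
    intro i _
    rw [if_neg]
    intro h
    exact hdvd ⟨i, h⟩

section Key2

variable {n : ℕ} [NeZero n]

lemma psi_val {ζ : ℂ} (hζ : IsPrimitiveRoot ζ n) (j : ZMod n) (a : ZMod n) :
    (AddChar.zmodChar n hζ.pow_eq_one) (j * a)
      = ((AddChar.zmodChar n hζ.pow_eq_one) j)
          ^ ((ZMod.castHom (ord_dvd j) (ZMod (addOrderOf j))) a).val := by
  haveI : NeZero (addOrderOf j) := ⟨(addOrderOf_pos j).ne'⟩
  set ψ := AddChar.zmodChar n hζ.pow_eq_one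
  have h1 : j * a = a.val • j := by
    rw [nsmul_eq_mul, ZMod.natCast_zmod_val, mul_comm]
  have hord : (ψ j) ^ addOrderOf j = 1 := by
    have : ψ (addOrderOf j • j) = 1 := by
      rw [addOrderOf_nsmul_eq_zero j, AddChar.map_zero_eq_one]
    rwa [AddChar.map_nsmul_eq_pow] at this
  have h2 : ((ZMod.castHom (ord_dvd j) (ZMod (addOrderOf j))) a).val
      = a.val % addOrderOf j := by
    have h0 : (ZMod.castHom (ord_dvd j) (ZMod (addOrderOf j))) a
        = ((a.val : ℕ) : ZMod (addOrderOf j)) := by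
      rw [← map_natCast (ZMod.castHom (ord_dvd j) (ZMod (addOrderOf j))) a.val,
        ZMod.natCast_zmod_val]
    rw [h0, ZMod.val_natCast]
  rw [h1, AddChar.map_nsmul_eq_pow, h2, ← pow_eq_pow_mod _ hord]

lemma orderOf_psi {ζ : ℂ} (hζ : IsPrimitiveRoot ζ n) (j : ZMod n) :
    IsPrimitiveRoot ((AddChar.zmodChar n hζ.pow_eq_one) j) (addOrderOf j) := by
  have hfin : IsOfFinOrder ζ := by
    rw [← orderOf_pos_iff, ← hζ.eq_orderOf]
    exact Nat.pos_of_ne_zero (NeZero.ne n)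
  have h1 : (AddChar.zmodChar n hζ.pow_eq_one) j = ζ ^ j.val :=
    AddChar.zmodChar_apply hζ.pow_eq_one j
  have h2 : orderOf ((AddChar.zmodChar n hζ.pow_eq_one) j) = addOrderOf j := by
    rw [h1, hfin.orderOf_pow, ← hζ.eq_orderOf]
    conv_rhs => rw [← ZMod.natCast_zmod_val j]
    rw [ZMod.addOrderOf_coe j.val (NeZero.ne n)]
  rw [← h2]
  exact IsPrimitiveRoot.orderOf _

lemma key2 {k : ℕ} (hkn : k ≤ n) (hodd : Odd k) {ζ : ℂ} (hζ : IsPrimitiveRoot ζ n)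
    (j : ZMod n) :
    ∑ Q ∈ (Finset.univ : Finset (ZMod n)).powersetCard k,
        ∏ a ∈ Q, (AddChar.zmodChar n hζ.pow_eq_one) (j * a)
      = if addOrderOf j ∣ k
          then (((n / addOrderOf j).choose (k / addOrderOf j) : ℕ) : ℂ) else 0 := by
  haveI : NeZero (addOrderOf j) := ⟨(addOrderOf_pos j).ne'⟩
  set ψ := AddChar.zmodChar n hζ.pow_eq_one with hψ
  set e := addOrderOf j with he
  have he0 : 0 < e := addOrderOf_pos j
  set μ := ψ j with hμdef
  have hμ : IsPrimitiveRoot μ e := orderOf_psi hζ j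
  rw [← coeff_prod_one_add]
  have hval : ∀ a : ZMod n, (1 : ℂ[X]) + C (ψ (j * a)) * X
      = (fun b : ZMod e => 1 + C (μ ^ b.val) * X) ((ZMod.castHom (ord_dvd j) (ZMod e)) a) := by
    intro a
    simp only
    rw [psi_val hζ j a]
  rw [Finset.prod_congr rfl (fun a _ => hval a),
    ← Finset.prod_fiberwise' Finset.univ (ZMod.castHom (ord_dvd j) (ZMod e))
      (fun b : ZMod e => 1 + C (μ ^ b.val) * X)]
  have hfib : ∀ b : ZMod e,
      ∏ _a ∈ Finset.univ.filter
          (fun a : ZMod n => (ZMod.castHom (ord_dvd j) (ZMod e)) a = b),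
        ((1 : ℂ[X]) + C (μ ^ b.val) * X)
      = ((1 : ℂ[X]) + C (μ ^ b.val) * X) ^ (n / e) := by
    intro b
    rw [Finset.prod_const, fiber_card n (ord_dvd j) b]
  rw [Finset.prod_congr rfl (fun b _ => hfib b), Finset.prod_pow,
    prod_zmod_eq_nthRoots e hμ (fun z => 1 + C z * X), prod_one_add_root he0 hμ,
    coeff_one_add_pow e (n / e) k he0 (by rw [Nat.mul_div_cancel' (ord_dvd j)]; exact hkn)]
  by_cases hdvd : e ∣ k
  · rw [if_pos hdvd, if_pos hdvd]
    have heodd : Odd e := by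
      rcases Nat.even_or_odd e with hev | hod
      · obtain ⟨c, hc⟩ := hdvd
        exact absurd (hc ▸ hev.mul_right c) (Nat.not_even_iff_odd.mpr hodd)
      · exact hod
    rw [Even.neg_one_pow heodd.add_one, one_pow, one_mul]
  · rw [if_neg hdvd, if_neg hdvd]
end Key2

section Chain

lemma T_chain (n : ℕ) [NeZero n] {k : ℕ} (hkn : k ≤ n) (hodd : Odd k)
    {ζ : ℂ} (hζ : IsPrimitiveRoot ζ n) :
    ((((Finset.univ : Finset (ZMod n)).powersetCard k).filter
        (fun Q => ∑ a ∈ Q, a = 0)).card : ℂ) * (n : ℂ)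
      = ∑ j : ZMod n, (if addOrderOf j ∣ k
          then (((n / addOrderOf j).choose (k / addOrderOf j) : ℕ) : ℂ) else 0) := by
  set ψ := AddChar.zmodChar n hζ.pow_eq_one with hψ
  have hprim : ψ.IsPrimitive := AddChar.zmodChar_primitive_of_primitive_root n hζ
  have step1 : ∀ j : ZMod n,
      (if addOrderOf j ∣ k
          then (((n / addOrderOf j).choose (k / addOrderOf j) : ℕ) : ℂ) else 0)
        = ∑ Q ∈ (Finset.univ : Finset (ZMod n)).powersetCard k, ψ (j * ∑ a ∈ Q, a) := by
    intro j
    rw [← key2 hkn hodd hζ j]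
    apply Finset.sum_congr rfl
    intro Q _
    rw [Finset.mul_sum, addChar_map_sum]
  rw [Finset.sum_congr rfl (fun j _ => step1 j), Finset.sum_comm]
  have step2 : ∀ Q : Finset (ZMod n),
      ∑ j : ZMod n, ψ (j * ∑ a ∈ Q, a)
        = if (∑ a ∈ Q, a) = 0 then ((n : ℕ) : ℂ) else 0 := by
    intro Q
    have := AddChar.sum_mulShift (ψ := ψ) (∑ a ∈ Q, a) hprim
    rw [ZMod.card] at this
    rw [this]
    split_ifs <;> simp
  rw [Finset.sum_congr rfl (fun Q _ => step2 Q), ← Finset.sum_filter,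
    Finset.sum_const, nsmul_eq_mul]

end Chain

section Grouping

lemma sum_orders (n k : ℕ) [NeZero n] :
    ∑ t : ZMod n, (if addOrderOf t ∣ k then (n / addOrderOf t).choose (k / addOrderOf t) else 0)
      = ∑ d ∈ n.divisors, d.totient * (if d ∣ k then (n / d).choose (k / d) else 0) := by
  rw [← Finset.sum_fiberwise_of_maps_to (g := addOrderOf) (t := n.divisors)
    (fun t _ => Nat.mem_divisors.mpr ⟨ord_dvd t, NeZero.ne n⟩)]
  apply Finset.sum_congr rfl
  intro d hd
  have h1 : ∀ t ∈ Finset.univ.filter (fun t : ZMod n => addOrderOf t = d),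
      (if addOrderOf t ∣ k then (n / addOrderOf t).choose (k / addOrderOf t) else 0)
        = (if d ∣ k then (n / d).choose (k / d) else 0) := by
    intro t ht
    rw [(Finset.mem_filter.mp ht).2]
  rw [Finset.sum_congr rfl h1, Finset.sum_const, smul_eq_mul]
  congr 1
  have := IsAddCyclic.card_addOrderOf_eq_totient (α := ZMod n)
    (d := d) (by rw [ZMod.card]; exact (Nat.mem_divisors.mp hd).1)
  exact this

lemma divisors_step (n k : ℕ) (hn : n ≠ 0) :
    ∑ d ∈ n.divisors, d.totient * (if d ∣ k then (n / d).choose (k / d) else 0)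
      = ∑ d ∈ (Nat.gcd n k).divisors, d.totient * (n / d).choose (k / d) := by
  rw [← Finset.sum_subset (Nat.divisors_subset_of_dvd hn (Nat.gcd_dvd_left n k))
    (fun d hdn hdg => ?_)]
  · apply Finset.sum_congr rfl
    intro d hd
    rw [if_pos ((Nat.mem_divisors.mp hd).1.trans (Nat.gcd_dvd_right n k))]
  · rw [if_neg, mul_zero]
    intro hdk
    exact hdg (Nat.mem_divisors.mpr ⟨Nat.dvd_gcd (Nat.mem_divisors.mp hdn).1 hdk,
      Nat.gcd_ne_zero_left hn⟩)

end Grouping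

section Burnside

open AddAction

variable (n k : ℕ) [NeZero n]

noncomputable instance KSaction : AddAction (ZMod n) {Q : Finset (ZMod n) // Q.card = k} where
  vadd t Q := ⟨t +ᵥ Q.1, by rw [Finset.card_vadd_finset]; exact Q.2⟩
  zero_vadd Q := Subtype.ext (zero_vadd _ Q.1)
  add_vadd a b Q := Subtype.ext (add_vadd a b Q.1)

lemma KS_vadd_val (t : ZMod n) (Q : {Q : Finset (ZMod n) // Q.card = k}) :
    (t +ᵥ Q).1 = t +ᵥ Q.1 := rfl

noncomputable def orbitEquiv :
    Quotient (AddAction.orbitRel (ZMod n) {Q : Finset (ZMod n) // Q.card = k})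
      ≃ {C : Set (Finset (ZMod n)) //
          ∃ Q : Finset (ZMod n), Q.card = k ∧ C = AddAction.orbit (ZMod n) Q} := by
  apply Equiv.ofBijective
    (f := Quotient.lift (fun Q : {Q : Finset (ZMod n) // Q.card = k} =>
      (⟨AddAction.orbit (ZMod n) Q.1, Q.1, Q.2, rfl⟩ :
        {C : Set (Finset (ZMod n)) //
          ∃ Q : Finset (ZMod n), Q.card = k ∧ C = AddAction.orbit (ZMod n) Q}))
      ?_)
  constructor
  · intro x y
    refine Quotient.inductionOn₂ x y ?_
    intro Q R h
    have h1 : AddAction.orbit (ZMod n) Q.1 = AddAction.orbit (ZMod n) R.1 :=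
      congrArg Subtype.val h
    apply Quotient.sound
    show Q ∈ AddAction.orbit (ZMod n) R
    have : Q.1 ∈ AddAction.orbit (ZMod n) R.1 := by
      rw [← h1]; exact AddAction.mem_orbit_self Q.1
    obtain ⟨t, ht⟩ := this
    exact ⟨t, Subtype.ext ht⟩
  · rintro ⟨C, Q, hQ, rfl⟩
    exact ⟨⟦⟨Q, hQ⟩⟧, rfl⟩
  · intro Q R h
    obtain ⟨t, ht⟩ := h
    apply Subtype.ext
    show AddAction.orbit (ZMod n) Q.1 = AddAction.orbit (ZMod n) R.1
    rw [← ht, KS_vadd_val]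
    exact AddAction.orbit_vadd t R.1

lemma fixedBy_card (t : ZMod n) :
    Nat.card (AddAction.fixedBy {Q : Finset (ZMod n) // Q.card = k} t)
      = (Finset.univ.filter fun Q : Finset (ZMod n) => Q.card = k ∧ t +ᵥ Q = Q).card := by
  have e : (AddAction.fixedBy {Q : Finset (ZMod n) // Q.card = k} t)
      ≃ {Q : Finset (ZMod n) // Q.card = k ∧ t +ᵥ Q = Q} :=
    { toFun := fun x => ⟨x.1.1, x.1.2, congrArg Subtype.val x.2⟩
      invFun := fun Q => ⟨⟨Q.1, Q.2.1⟩, Subtype.ext Q.2.2⟩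
      left_inv := fun x => rfl
      right_inv := fun Q => rfl }
  rw [Nat.card_congr e, Nat.card_eq_fintype_card, Fintype.card_subtype]

end Burnside

/-- For odd `k`, `T(n,k,0) = N(n,k) = (1/n) ∑_{d ∣ gcd(n,k)} φ(d) C(n/d, k/d)`. -/
theorem stmt_11 (n k : ℕ) (hk : 0 < k) (hkn : k < n) (hodd : Odd k) :
    T n k 0 = N n k ∧
    (T n k 0 : ℤ) * n =
      ∑ d ∈ (Nat.gcd n k).divisors,
        (Nat.totient d : ℤ) * (Nat.choose (n / d) (k / d) : ℤ) := by
  classical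
  haveI : NeZero n := ⟨by omega⟩
  -- identify T with a finset card
  have hT : T n k 0 = (((Finset.univ : Finset (ZMod n)).powersetCard k).filter
      (fun Q => ∑ a ∈ Q, a = 0)).card := by
    rw [T, Nat.card_eq_fintype_card, Fintype.card_subtype]
    congr 1
    ext Q
    simp [Finset.mem_powersetCard_univ, and_comm]
  -- the natural number sum
  set S : ℕ := ∑ d ∈ (Nat.gcd n k).divisors, d.totient * ((n / d).choose (k / d)) with hS
  -- T-side: over ℂ
  have hζ : IsPrimitiveRoot (Complex.exp (2 * Real.pi * Complex.I / n)) n :=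
    Complex.isPrimitiveRoot_exp n (NeZero.ne n)
  have hTC : ((T n k 0 : ℕ) : ℂ) * (n : ℂ) = ((S : ℕ) : ℂ) := by
    rw [hT, T_chain n hkn.le hodd hζ]
    have hstep : ∀ j : ZMod n, (if addOrderOf j ∣ k
        then (((n / addOrderOf j).choose (k / addOrderOf j) : ℕ) : ℂ) else 0)
        = (((if addOrderOf j ∣ k
            then (n / addOrderOf j).choose (k / addOrderOf j) else 0 : ℕ)) : ℂ) := by
      intro j
      split_ifs <;> simp
    rw [Finset.sum_congr rfl (fun j _ => hstep j), ← Nat.cast_sum,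
      sum_orders n k, divisors_step n k (NeZero.ne n), hS]
  have hTS : T n k 0 * n = S := by
    have := hTC
    rw [← Nat.cast_mul] at this
    exact_mod_cast this
  -- N-side
  have hNQ : N n k = Fintype.card
      (Quotient (AddAction.orbitRel (ZMod n) {Q : Finset (ZMod n) // Q.card = k})) := by
    rw [N, ← Nat.card_eq_fintype_card]
    exact (Nat.card_congr (orbitEquiv n k)).symm
  have hNS : N n k * n = S := by
    rw [hNQ]
    have hb := AddAction.sum_card_fixedBy_eq_card_orbits_mul_card_addGroup
      (ZMod n) {Q : Finset (ZMod n) // Q.card = k}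
    rw [ZMod.card] at hb
    rw [← hb]
    have hfix : ∀ t : ZMod n,
        Fintype.card (AddAction.fixedBy {Q : Finset (ZMod n) // Q.card = k} t)
          = if addOrderOf t ∣ k then (n / addOrderOf t).choose (k / addOrderOf t) else 0 := by
      intro t
      rw [← Nat.card_eq_fintype_card, fixedBy_card n k t, card_invariant t k]
    rw [Finset.sum_congr rfl (fun t _ => hfix t), sum_orders n k,
      divisors_step n k (NeZero.ne n), hS]
  constructor
  · have : T n k 0 * n = N n k * n := by rw [hTS, hNS]
    exact Nat.eq_of_mul_eq_mul_right (by omega) this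
  · rw [show ((T n k 0 : ℤ) * n) = ((T n k 0 * n : ℕ) : ℤ) by push_cast; ring, hTS, hS]
    push_cast
    rfl
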